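/- Let w be an even positive integer, let Z_1, …, Z_{w/2} be independent random variables with values in [0,1] and common mean μ₁, let Z_{w/2+1}, …, Z_w be independent random variables with values in [0,1] and common mean μ₂, with all w variables mutually independent, and suppose |μ₂ − μ₁| ≥ δ. If b > 0 and c > 0 satisfy δ ≥ 2b/w + c, then ℙ(|S| > b) ≥ 1 − 2·exp(−w·c²/4), where S = Σ_{ℓ=w/2+1}^{w} Z_ℓ − Σ_{ℓ=1}^{w/2} Z_ℓ. -/

import Mathlib

open MeasureTheory ProbabilityTheory

lemma chord_exp (t : ℝ) {z : ℝ} (h0 : 0 ≤ z) (h1 : z ≤ 1) :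
    Real.exp (t * z) ≤ 1 + (Real.exp t - 1) * z := by
  have h := convexOn_exp.2 (Set.mem_univ (0:ℝ)) (Set.mem_univ t)
    (by linarith : (0:ℝ) ≤ 1 - z) h0 (by ring : (1 - z) + z = 1)
  simp only [smul_eq_mul, mul_zero, zero_add, Real.exp_zero, mul_one] at h
  calc Real.exp (t * z) = Real.exp (z * t) := by ring_nf
    _ ≤ 1 - z + z * Real.exp t := h
    _ = 1 + (Real.exp t - 1) * z := by ring

lemma deriv_key {p t : ℝ} (hp0 : 0 ≤ p) (hp1 : p ≤ 1) (ht : 0 ≤ t) :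
    p * Real.exp t ≤ (p + t / 2) * (1 - p + p * Real.exp t) := by
  set E := Real.exp t with hE
  have hE1 : 1 + t ≤ E := by linarith [Real.add_one_le_exp t]
  rcases le_or_gt t 2 with h2 | h2
  · have ha : Real.exp (t/2) * (1 - t/2) ≤ 1 := by
      have h1 : 1 - t/2 ≤ Real.exp (-(t/2)) := by linarith [Real.add_one_le_exp (-(t/2))]
      calc Real.exp (t/2) * (1 - t/2) ≤ Real.exp (t/2) * Real.exp (-(t/2)) :=
            mul_le_mul_of_nonneg_left h1 (Real.exp_pos _).le
        _ = 1 := by rw [← Real.exp_add]; simp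
    have hb : (0:ℝ) ≤ 1 - t/2 := by linarith
    have hsq : E * (2 - t)^2 ≤ 4 := by
      have hEe : E = Real.exp (t/2) * Real.exp (t/2) := by
        rw [hE, ← Real.exp_add]; ring_nf
      nlinarith [mul_nonneg (Real.exp_pos (t/2)).le hb, ha]
    nlinarith [sq_nonneg (p - (2 - t)/4), mul_nonneg ht (sq_nonneg (p - (2 - t)/4)),
      mul_nonneg (mul_nonneg hp0 (by linarith : (0:ℝ) ≤ 1 - p)) (by linarith : (0:ℝ) ≤ E - 1)]
  · nlinarith [mul_nonneg hp0 (by linarith : (0:ℝ) ≤ E - 1),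
      mul_nonneg (mul_nonneg hp0 hp0) (by linarith : (0:ℝ) ≤ E - 1)]

lemma key_pos {p : ℝ} (hp0 : 0 ≤ p) (hp1 : p ≤ 1) {t : ℝ} (ht : 0 ≤ t) :
    1 - p + p * Real.exp t ≤ Real.exp (t * p + t ^ 2 / 4) := by
  have hD : ∀ x : ℝ, 0 < 1 - p + p * Real.exp x := by
    intro x
    rcases eq_or_lt_of_le hp0 with h | h
    · simp [← h]
    · have := Real.exp_pos x; nlinarith
  set g : ℝ → ℝ := fun x => x * p + x ^ 2 / 4 - Real.log (1 - p + p * Real.exp x) with hg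
  have hderiv : ∀ x : ℝ, HasDerivAt g (p + x / 2 - p * Real.exp x / (1 - p + p * Real.exp x)) x := by
    intro x
    have h1 : HasDerivAt (fun x : ℝ => x * p + x ^ 2 / 4) (p + x / 2) x := by
      have := ((hasDerivAt_id x).mul_const p).add
        (((hasDerivAt_pow 2 x)).div_const 4)
      exact this.congr_deriv (by norm_num; ring)
    have h2 : HasDerivAt (fun x : ℝ => 1 - p + p * Real.exp x) (p * Real.exp x) x :=
      ((Real.hasDerivAt_exp x).const_mul p).const_add (1 - p)
    exact h1.sub (h2.log (hD x).ne')
  have hmono : MonotoneOn g (Set.Ici 0) := by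
    apply monotoneOn_of_deriv_nonneg (convex_Ici 0)
    · exact (fun x _ => ((hderiv x).differentiableAt).continuousAt.continuousWithinAt)
    · intro x hx
      exact ((hderiv x).differentiableAt).differentiableWithinAt
    · intro x hx
      rw [interior_Ici] at hx
      rw [(hderiv x).deriv]
      have hx0 : (0:ℝ) ≤ x := le_of_lt hx
      have := deriv_key hp0 hp1 hx0
      rw [sub_nonneg, div_le_iff₀ (hD x)]
      linarith
  have h0 : g 0 = 0 := by simp [hg]
  have hgt : 0 ≤ g t := by
    rw [← h0]; exact hmono (by simp) (by exact ht) ht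
  have : Real.log (1 - p + p * Real.exp t) ≤ t * p + t ^ 2 / 4 := by
    simp only [hg] at hgt; linarith
  calc 1 - p + p * Real.exp t = Real.exp (Real.log (1 - p + p * Real.exp t)) :=
        (Real.exp_log (hD t)).symm
    _ ≤ _ := Real.exp_le_exp.mpr this

lemma key_all {p : ℝ} (hp0 : 0 ≤ p) (hp1 : p ≤ 1) (t : ℝ) :
    1 + (Real.exp t - 1) * p ≤ Real.exp (t * p + t ^ 2 / 4) := by
  have hrw : 1 + (Real.exp t - 1) * p = 1 - p + p * Real.exp t := by ring
  rw [hrw]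
  rcases le_or_gt 0 t with ht | ht
  · exact key_pos hp0 hp1 ht
  · have h := key_pos (p := 1 - p) (by linarith) (by linarith) (t := -t) (by linarith)
    have hmul := mul_le_mul_of_nonneg_right h (Real.exp_pos t).le
    calc 1 - p + p * Real.exp t
        = (1 - (1 - p) + (1 - p) * Real.exp (-t)) * Real.exp t := by
          rw [Real.exp_neg]
          field_simp
          ring
      _ ≤ Real.exp (-t * (1 - p) + (-t) ^ 2 / 4) * Real.exp t := hmul
      _ = Real.exp (t * p + t ^ 2 / 4) := by rw [← Real.exp_add]; ring_nf

lemma mgf_le_of_mem_Icc {Ω : Type*} [MeasurableSpace Ω] (P : Measure Ω)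
    [IsProbabilityMeasure P] {X : Ω → ℝ} (hm : Measurable X)
    (hb : ∀ᵐ ω ∂P, X ω ∈ Set.Icc (0 : ℝ) 1) (t : ℝ) :
    mgf X P t ≤ Real.exp (t * (∫ ω, X ω ∂P) + t ^ 2 / 4) := by
  have hXint : Integrable X P := by
    refine (integrable_const (1:ℝ)).mono' hm.aestronglyMeasurable ?_
    filter_upwards [hb] with ω hω
    rw [Real.norm_eq_abs, abs_le]; exact ⟨by linarith [hω.1], hω.2⟩
  have hexp_int : Integrable (fun ω => Real.exp (t * X ω)) P := by
    refine (integrable_const (Real.exp |t|)).mono'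
      ((hm.const_mul t).exp).aestronglyMeasurable ?_
    filter_upwards [hb] with ω hω
    rw [Real.norm_eq_abs, abs_of_pos (Real.exp_pos _)]
    apply Real.exp_le_exp.mpr
    calc t * X ω ≤ |t * X ω| := le_abs_self _
      _ = |t| * |X ω| := abs_mul t (X ω)
      _ ≤ |t| * 1 := by
          apply mul_le_mul_of_nonneg_left _ (abs_nonneg t)
          rw [abs_le]; exact ⟨by linarith [hω.1], hω.2⟩
      _ = |t| := mul_one _
  have hmean0 : 0 ≤ ∫ ω, X ω ∂P := integral_nonneg_of_ae (by filter_upwards [hb] with ω hω; exact hω.1)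
  have hmean1 : (∫ ω, X ω ∂P) ≤ 1 := by
    calc (∫ ω, X ω ∂P) ≤ ∫ _, (1:ℝ) ∂P :=
          integral_mono_ae hXint (integrable_const 1) (by filter_upwards [hb] with ω hω; exact hω.2)
      _ = 1 := by simp
  calc mgf X P t = ∫ ω, Real.exp (t * X ω) ∂P := rfl
    _ ≤ ∫ ω, (1 + (Real.exp t - 1) * X ω) ∂P := by
        refine integral_mono_ae hexp_int ((integrable_const 1).add (hXint.const_mul _)) ?_
        filter_upwards [hb] with ω hω
        exact chord_exp t hω.1 hω.2
    _ = 1 + (Real.exp t - 1) * ∫ ω, X ω ∂P := by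
        rw [integral_add (integrable_const 1) (hXint.const_mul _), integral_const,
          integral_const_mul]
        simp
    _ ≤ _ := key_all hmean0 hmean1 t

lemma chernoff_side {Ω : Type*} [MeasurableSpace Ω] (P : Measure Ω) [IsProbabilityMeasure P]
    (w : ℕ) (Z : ℕ → Ω → ℝ) (ε : ℕ → ℝ)
    (hmeas : ∀ ℓ ∈ Finset.Icc 1 w, Measurable (Z ℓ))
    (hbdd : ∀ ℓ ∈ Finset.Icc 1 w, ∀ᵐ ω ∂P, Z ℓ ω ∈ Set.Icc (0 : ℝ) 1)
    (hε : ∀ ℓ, ε ℓ = 1 ∨ ε ℓ = -1)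
    (hindep : iIndepFun
      (fun ℓ : Finset.Icc 1 w => Z (ℓ : ℕ)) P)
    (b c : ℝ) (hc : 0 < c)
    (hmeansum : ∑ ℓ ∈ Finset.Icc 1 w, ε ℓ * ∫ ω, Z ℓ ω ∂P ≤ -(b + (w:ℝ) * c / 2)) :
    (P {ω | -b ≤ ∑ ℓ ∈ Finset.Icc 1 w, ε ℓ * Z ℓ ω}).toReal
      ≤ Real.exp (-(w:ℝ) * c ^ 2 / 4) := by
  classical
  set T : Ω → ℝ := fun ω => ∑ ℓ ∈ Finset.Icc 1 w, ε ℓ * Z ℓ ω with hT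
  set Y : (Finset.Icc 1 w) → Ω → ℝ := fun ℓ ω => ε (ℓ : ℕ) * Z (ℓ : ℕ) ω with hY
  have hYmeas : ∀ ℓ : Finset.Icc 1 w, Measurable (Y ℓ) :=
    fun ℓ => (hmeas ℓ ℓ.2).const_mul _
  have hYindep : iIndepFun Y P :=
    hindep.comp (fun ℓ (x : ℝ) => ε (ℓ : ℕ) * x) (fun ℓ => measurable_const_mul _)
  have hTsum : T = ∑ ℓ : Finset.Icc 1 w, Y ℓ := by
    funext ω
    rw [Finset.sum_apply]
    exact (Finset.sum_coe_sort (Finset.Icc 1 w) (fun ℓ => ε ℓ * Z ℓ ω)).symm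
  have hball : ∀ᵐ ω ∂P, ∀ ℓ ∈ Finset.Icc 1 w, Z ℓ ω ∈ Set.Icc (0:ℝ) 1 :=
    (ae_ball_iff (Finset.Icc 1 w).countable_toSet).mpr hbdd
  have hTmeas : Measurable T := by
    apply Finset.measurable_sum
    intro ℓ hℓ
    exact (hmeas ℓ hℓ).const_mul _
  have hint : Integrable (fun ω => Real.exp (c * T ω)) P := by
    refine (integrable_const (Real.exp (c * w))).mono'
      ((hTmeas.const_mul c).exp).aestronglyMeasurable ?_
    filter_upwards [hball] with ω hω
    rw [Real.norm_eq_abs, abs_of_pos (Real.exp_pos _)]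
    apply Real.exp_le_exp.mpr
    apply mul_le_mul_of_nonneg_left _ hc.le
    calc T ω ≤ ∑ ℓ ∈ Finset.Icc 1 w, (1:ℝ) := by
          apply Finset.sum_le_sum
          intro ℓ hℓ
          have hz := hω ℓ hℓ
          rcases hε ℓ with h | h <;> rw [h]
          · rw [one_mul]; exact hz.2
          · rw [neg_one_mul]; linarith [hz.1]
      _ = w := by simp [Nat.card_Icc]
  have hfac : ∀ ℓ : Finset.Icc 1 w,
      mgf (Y ℓ) P c ≤ Real.exp (c * (ε (ℓ:ℕ) * ∫ ω, Z (ℓ:ℕ) ω ∂P) + c ^ 2 / 4) := by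
    intro ℓ
    rcases hε (ℓ : ℕ) with h | h
    · have : Y ℓ = Z (ℓ : ℕ) := by funext ω; simp [hY, h]
      rw [this, h]
      rw [one_mul]
      exact mgf_le_of_mem_Icc P (hmeas ℓ ℓ.2) (hbdd ℓ ℓ.2) c
    · have : Y ℓ = -(Z (ℓ : ℕ)) := by funext ω; simp [hY, h]
      rw [this, mgf_neg, h]
      have := mgf_le_of_mem_Icc P (hmeas ℓ ℓ.2) (hbdd ℓ ℓ.2) (-c)
      calc mgf (Z (ℓ:ℕ)) P (-c) ≤ Real.exp (-c * ∫ ω, Z (ℓ:ℕ) ω ∂P + (-c) ^ 2 / 4) := this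
        _ = Real.exp (c * (-1 * ∫ ω, Z (ℓ:ℕ) ω ∂P) + c ^ 2 / 4) := by ring_nf
  have hcard : (Finset.univ : Finset (Finset.Icc 1 w)).card = w := by
    simp [Nat.card_Icc]
  have hmgfT : mgf T P c ≤ Real.exp (c * (∑ ℓ ∈ Finset.Icc 1 w, ε ℓ * ∫ ω, Z ℓ ω ∂P)
      + (w : ℝ) * c ^ 2 / 4) := by
    rw [hTsum, hYindep.mgf_sum hYmeas]
    calc ∏ ℓ : Finset.Icc 1 w, mgf (Y ℓ) P c
        ≤ ∏ ℓ : Finset.Icc 1 w,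
            Real.exp (c * (ε (ℓ:ℕ) * ∫ ω, Z (ℓ:ℕ) ω ∂P) + c ^ 2 / 4) :=
          Finset.prod_le_prod (fun _ _ => mgf_nonneg) (fun ℓ _ => hfac ℓ)
      _ = Real.exp (∑ ℓ : Finset.Icc 1 w,
            (c * (ε (ℓ:ℕ) * ∫ ω, Z (ℓ:ℕ) ω ∂P) + c ^ 2 / 4)) := by
          rw [Real.exp_sum]
      _ = _ := by
          rw [Finset.sum_add_distrib, Finset.sum_const, hcard, ← Finset.mul_sum,
            Finset.sum_coe_sort (Finset.Icc 1 w) (fun ℓ => ε ℓ * ∫ ω, Z ℓ ω ∂P)]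
          rw [nsmul_eq_mul]
          ring_nf
  have hch := measure_ge_le_exp_mul_mgf (X := T) (μ := P) (-b) hc.le hint
  refine hch.trans ?_
  have hfin : Real.exp (-c * -b) * mgf T P c
      ≤ Real.exp (-c * -b) * Real.exp (c * (∑ ℓ ∈ Finset.Icc 1 w, ε ℓ * ∫ ω, Z ℓ ω ∂P)
        + (w : ℝ) * c ^ 2 / 4) :=
    mul_le_mul_of_nonneg_left hmgfT (Real.exp_pos _).le
  refine hfin.trans ?_
  rw [← Real.exp_add]
  apply Real.exp_le_exp.mpr
  have := mul_le_mul_of_nonneg_left hmeansum hc.le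
  nlinarith

/-- Let `w` be an even positive integer; let `Z 1, …, Z (w/2)`
be independent `[0,1]`-valued random variables with common mean `μ₁`, and
`Z (w/2+1), …, Z w` independent `[0,1]`-valued random variables with common mean
`μ₂`, all `w` variables mutually independent, with `|μ₂ − μ₁| ≥ δ`.  If
`b > 0` and `c > 0` satisfy `δ ≥ 2b/w + c`, then
`P(|S| > b) ≥ 1 − 2·exp(−w·c²/4)`, where
`S = Σ_{ℓ=w/2+1}^{w} Z ℓ − Σ_{ℓ=1}^{w/2} Z ℓ`. -/
theorem mucb_successful_detection
    {Ω : Type*} [MeasurableSpace Ω] (P : Measure Ω) [IsProbabilityMeasure P]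
    (w : ℕ) (hw : 0 < w) (hweven : Even w)
    (Z : ℕ → Ω → ℝ) (μ₁ μ₂ δ : ℝ)
    (hmeas : ∀ ℓ ∈ Finset.Icc 1 w, Measurable (Z ℓ))
    (hbdd : ∀ ℓ ∈ Finset.Icc 1 w, ∀ᵐ ω ∂P, Z ℓ ω ∈ Set.Icc (0 : ℝ) 1)
    (hmean₁ : ∀ ℓ ∈ Finset.Icc 1 (w / 2), ∫ ω, Z ℓ ω ∂P = μ₁)
    (hmean₂ : ∀ ℓ ∈ Finset.Icc (w / 2 + 1) w, ∫ ω, Z ℓ ω ∂P = μ₂)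
    (hindep : iIndepFun
      (fun ℓ : Finset.Icc 1 w => Z (ℓ : ℕ)) P)
    (hgap : δ ≤ |μ₂ - μ₁|)
    (b c : ℝ) (hb : 0 < b) (hc : 0 < c) (hdetect : 2 * b / w + c ≤ δ)
    (S : Ω → ℝ)
    (hS : S = fun ω =>
      (∑ ℓ ∈ Finset.Icc (w / 2 + 1) w, Z ℓ ω) - ∑ ℓ ∈ Finset.Icc 1 (w / 2), Z ℓ ω) :
    ENNReal.ofReal (1 - 2 * Real.exp (-(w : ℝ) * c ^ 2 / 4)) ≤ P {ω | b < |S ω|} := by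
  classical
  set m := w / 2 with hmdef
  have hm2 : 2 * m = w := by
    obtain ⟨r, hr⟩ := hweven; omega
  have hmR : (m : ℝ) * 2 = (w : ℝ) := by
    rw [← hm2]; push_cast; ring
  have hwR : (0:ℝ) < (w : ℝ) := by exact_mod_cast hw
  have hsplit : ∀ f : ℕ → ℝ, ∑ ℓ ∈ Finset.Icc 1 w, f ℓ =
      (∑ ℓ ∈ Finset.Icc 1 m, f ℓ) + ∑ ℓ ∈ Finset.Icc (m + 1) w, f ℓ := by
    intro f
    rw [show (1:ℕ) = 0 + 1 from rfl, Finset.Icc_add_one_left_eq_Ioc, Finset.Icc_add_one_left_eq_Ioc, zero_add, Finset.Icc_add_one_left_eq_Ioc]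
    exact (Finset.sum_Ioc_consecutive f (Nat.zero_le m) (by omega)).symm
  have hcard1 : (Finset.Icc 1 m).card = m := by simp [Nat.card_Icc]
  have hcard2 : (Finset.Icc (m + 1) w).card = m := by
    rw [Nat.card_Icc]; omega
  have hδb : (m : ℝ) * δ ≥ b + (w : ℝ) * c / 2 := by
    have h1 : (m:ℝ) * (2 * b / w + c) ≤ (m:ℝ) * δ := by
      apply mul_le_mul_of_nonneg_left hdetect (by positivity)
    have h2 : (m:ℝ) * (2 * b / w + c) = b + (w:ℝ) * c / 2 := by
      field_simp
      linear_combination hmR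
    linarith
  -- get the sign pattern
  obtain ⟨ε, hεv, hmean, hincl⟩ :
      ∃ ε : ℕ → ℝ, (∀ ℓ, ε ℓ = 1 ∨ ε ℓ = -1) ∧
        (∑ ℓ ∈ Finset.Icc 1 w, ε ℓ * ∫ ω, Z ℓ ω ∂P ≤ -(b + (w:ℝ) * c / 2)) ∧
        (∀ ω, |S ω| ≤ b → -b ≤ ∑ ℓ ∈ Finset.Icc 1 w, ε ℓ * Z ℓ ω) := by
    rcases le_total μ₁ μ₂ with h | h
    · refine ⟨fun ℓ => if ℓ ≤ m then 1 else -1, fun ℓ => by by_cases h' : ℓ ≤ m <;> simp [h'],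
        ?_, ?_⟩
      · have e1 : ∑ ℓ ∈ Finset.Icc 1 m,
            (if ℓ ≤ m then (1:ℝ) else -1) * ∫ ω, Z ℓ ω ∂P = (m : ℝ) * μ₁ := by
          rw [Finset.sum_congr rfl (fun ℓ hℓ => by
            rw [if_pos (Finset.mem_Icc.mp hℓ).2, hmean₁ ℓ hℓ, one_mul])]
          simp [hcard1]
        have e2 : ∑ ℓ ∈ Finset.Icc (m+1) w,
            (if ℓ ≤ m then (1:ℝ) else -1) * ∫ ω, Z ℓ ω ∂P = -((m : ℝ) * μ₂) := by
          rw [Finset.sum_congr rfl (fun ℓ hℓ => by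
            rw [if_neg (by have := (Finset.mem_Icc.mp hℓ).1; omega), hmean₂ ℓ hℓ, neg_one_mul])]
          simp [hcard2]
        rw [hsplit, e1, e2]
        have habs : δ ≤ μ₂ - μ₁ := by rwa [abs_of_nonneg (by linarith)] at hgap
        nlinarith [hδb, mul_le_mul_of_nonneg_left habs (by positivity : (0:ℝ) ≤ (m:ℝ))]
      · intro ω hω
        have t1 : ∑ ℓ ∈ Finset.Icc 1 m, (if ℓ ≤ m then (1:ℝ) else -1) * Z ℓ ω
            = ∑ ℓ ∈ Finset.Icc 1 m, Z ℓ ω :=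
          Finset.sum_congr rfl (fun ℓ hℓ => by rw [if_pos (Finset.mem_Icc.mp hℓ).2, one_mul])
        have t2 : ∑ ℓ ∈ Finset.Icc (m+1) w, (if ℓ ≤ m then (1:ℝ) else -1) * Z ℓ ω
            = -∑ ℓ ∈ Finset.Icc (m+1) w, Z ℓ ω := by
          rw [← Finset.sum_neg_distrib]
          exact Finset.sum_congr rfl (fun ℓ hℓ => by
            rw [if_neg (by have := (Finset.mem_Icc.mp hℓ).1; omega), neg_one_mul])
        rw [hsplit, t1, t2]
        have hSω : S ω = (∑ ℓ ∈ Finset.Icc (m + 1) w, Z ℓ ω) - ∑ ℓ ∈ Finset.Icc 1 m, Z ℓ ω := by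
          rw [hS]
        have := abs_le.mp hω
        rw [hSω] at this
        linarith [this.2]
    · refine ⟨fun ℓ => if ℓ ≤ m then -1 else 1, fun ℓ => by by_cases h' : ℓ ≤ m <;> simp [h'],
        ?_, ?_⟩
      · have e1 : ∑ ℓ ∈ Finset.Icc 1 m,
            (if ℓ ≤ m then (-1:ℝ) else 1) * ∫ ω, Z ℓ ω ∂P = -((m : ℝ) * μ₁) := by
          rw [Finset.sum_congr rfl (fun ℓ hℓ => by
            rw [if_pos (Finset.mem_Icc.mp hℓ).2, hmean₁ ℓ hℓ, neg_one_mul])]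
          simp [hcard1]
        have e2 : ∑ ℓ ∈ Finset.Icc (m+1) w,
            (if ℓ ≤ m then (-1:ℝ) else 1) * ∫ ω, Z ℓ ω ∂P = (m : ℝ) * μ₂ := by
          rw [Finset.sum_congr rfl (fun ℓ hℓ => by
            rw [if_neg (by have := (Finset.mem_Icc.mp hℓ).1; omega), hmean₂ ℓ hℓ, one_mul])]
          simp [hcard2]
        rw [hsplit, e1, e2]
        have habs : δ ≤ μ₁ - μ₂ := by
          rw [abs_sub_comm] at hgap
          rwa [abs_of_nonneg (by linarith)] at hgap
        nlinarith [hδb, mul_le_mul_of_nonneg_left habs (by positivity : (0:ℝ) ≤ (m:ℝ))]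
      · intro ω hω
        have t1 : ∑ ℓ ∈ Finset.Icc 1 m, (if ℓ ≤ m then (-1:ℝ) else 1) * Z ℓ ω
            = -∑ ℓ ∈ Finset.Icc 1 m, Z ℓ ω := by
          rw [← Finset.sum_neg_distrib]
          exact Finset.sum_congr rfl (fun ℓ hℓ => by
            rw [if_pos (Finset.mem_Icc.mp hℓ).2, neg_one_mul])
        have t2 : ∑ ℓ ∈ Finset.Icc (m+1) w, (if ℓ ≤ m then (-1:ℝ) else 1) * Z ℓ ω
            = ∑ ℓ ∈ Finset.Icc (m+1) w, Z ℓ ω :=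
          Finset.sum_congr rfl (fun ℓ hℓ => by
            rw [if_neg (by have := (Finset.mem_Icc.mp hℓ).1; omega), one_mul])
        rw [hsplit, t1, t2]
        have hSω : S ω = (∑ ℓ ∈ Finset.Icc (m + 1) w, Z ℓ ω) - ∑ ℓ ∈ Finset.Icc 1 m, Z ℓ ω := by
          rw [hS]
        have := abs_le.mp hω
        rw [hSω] at this
        linarith [this.1]
  -- Chernoff bound
  have hcs := chernoff_side P w Z ε hmeas hbdd hεv hindep b c hc hmean
  have hSmeas : Measurable S := by
    rw [hS]
    exact (Finset.measurable_sum _ (fun ℓ hℓ => hmeas ℓ (by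
      simp only [Finset.mem_Icc] at hℓ ⊢; omega))).sub
      (Finset.measurable_sum _ (fun ℓ hℓ => hmeas ℓ (by
      simp only [Finset.mem_Icc] at hℓ ⊢; omega)))
  have hA : MeasurableSet {ω | b < |S ω|} := measurableSet_lt measurable_const hSmeas.abs
  have hsub : {ω | b < |S ω|}ᶜ ⊆ {ω | -b ≤ ∑ ℓ ∈ Finset.Icc 1 w, ε ℓ * Z ℓ ω} := by
    intro ω hω
    exact hincl ω (not_lt.mp hω)
  have hPc : P ({ω | b < |S ω|}ᶜ) ≤ ENNReal.ofReal (Real.exp (-(w:ℝ) * c ^ 2 / 4)) := by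
    calc P ({ω | b < |S ω|}ᶜ) ≤ P {ω | -b ≤ ∑ ℓ ∈ Finset.Icc 1 w, ε ℓ * Z ℓ ω} :=
          measure_mono hsub
      _ = ENNReal.ofReal ((P {ω | -b ≤ ∑ ℓ ∈ Finset.Icc 1 w, ε ℓ * Z ℓ ω}).toReal) :=
          (ENNReal.ofReal_toReal (measure_ne_top P _)).symm
      _ ≤ _ := ENNReal.ofReal_le_ofReal hcs
  have hcompl : P {ω | b < |S ω|} = 1 - P ({ω | b < |S ω|}ᶜ) := by
    have h1 := prob_compl_eq_one_sub (μ := P) hA.compl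
    rwa [compl_compl] at h1
  calc ENNReal.ofReal (1 - 2 * Real.exp (-(w : ℝ) * c ^ 2 / 4))
      = ENNReal.ofReal 1 - ENNReal.ofReal (2 * Real.exp (-(w : ℝ) * c ^ 2 / 4)) :=
        ENNReal.ofReal_sub _ (by positivity)
    _ = 1 - ENNReal.ofReal (2 * Real.exp (-(w : ℝ) * c ^ 2 / 4)) := by
        rw [ENNReal.ofReal_one]
    _ ≤ 1 - P ({ω | b < |S ω|}ᶜ) := by
        apply tsub_le_tsub_left
        refine hPc.trans (ENNReal.ofReal_le_ofReal ?_)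
        nlinarith [Real.exp_pos (-(w : ℝ) * c ^ 2 / 4)]
    _ = P {ω | b < |S ω|} := hcompl.symm
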